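/- (Dominance of the compound-symmetric averaging.) Let T ≥ 1 and let m : Fin T → ℝ satisfy m_t = m_{(T−t) mod T} for all t. Set s = (∑_{t=0}^{T−1} m_t) − 1/2, and define m' : Fin T → ℝ by m'_0 = s/T + 1/2 and m'_t = s/T for t = 1, …, T−1. If m_0 − 1/2 + ∑_{t=1}^{T−1} m_t · cos(2π j t / T) ≥ 0 for every j = 1, …, T−1, then circ(m) − circ(m') is positive semidefinite. -/

import Mathlib

open Complex Finset

noncomputable def csdE (T : ℕ) (n : ℤ) : ℂ := Complex.exp (2 * Real.pi * Complex.I * n / T)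

lemma csdE_add (T : ℕ) (a b : ℤ) : csdE T (a + b) = csdE T a * csdE T b := by
  rw [csdE, csdE, csdE, ← Complex.exp_add]
  congr 1
  push_cast
  ring

lemma csdE_T_mul (T : ℕ) (hT : 0 < T) (a : ℤ) : csdE T ((T : ℤ) * a) = 1 := by
  rw [csdE]
  have hT0 : (T : ℂ) ≠ 0 := by exact_mod_cast hT.ne'
  have h : (2 * (Real.pi : ℂ) * Complex.I * (((T : ℤ) * a : ℤ) : ℂ) / T) =
      (a : ℂ) * (2 * (Real.pi : ℂ) * Complex.I) := by
    push_cast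
    field_simp
  rw [h]
  exact Complex.exp_int_mul_two_pi_mul_I a

lemma csdE_pow (T : ℕ) (n : ℤ) : ∀ k : ℕ, csdE T ((k : ℤ) * n) = csdE T n ^ k := by
  intro k
  induction k with
  | zero => simp [csdE]
  | succ k ih =>
      have h : (((k : ℕ) + 1 : ℕ) : ℤ) * n = (k : ℤ) * n + n := by push_cast; ring
      rw [h, csdE_add, ih, pow_succ]

lemma csdE_conj (T : ℕ) (n : ℤ) : (starRingEnd ℂ) (csdE T n) = csdE T (-n) := by
  rw [csdE, csdE, ← Complex.exp_conj]
  congr 1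
  simp only [map_div₀, map_mul, map_ofNat, Complex.conj_I, Complex.conj_ofReal,
    map_intCast, map_natCast]
  push_cast
  ring

lemma csdE_re (T : ℕ) (n : ℤ) : (csdE T n).re = Real.cos (2 * Real.pi * n / T) := by
  have h : csdE T n = Complex.exp (((2 * Real.pi * n / T : ℝ) : ℂ) * Complex.I) := by
    rw [csdE]; congr 1; push_cast; ring
  rw [h, Complex.exp_ofReal_mul_I_re]

lemma csdE_sum (T : ℕ) (hT : 0 < T) (n : ℤ) :
    ∑ k : Fin T, csdE T ((k : ℕ) * n) = if (T : ℤ) ∣ n then (T : ℂ) else 0 := by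
  have hrw : ∀ k : Fin T, csdE T ((k : ℕ) * n) = csdE T n ^ (k : ℕ) := fun k => csdE_pow T n k
  simp only [hrw]
  rw [Fin.sum_univ_eq_sum_range (fun k => csdE T n ^ k) T]
  by_cases hdvd : (T : ℤ) ∣ n
  · obtain ⟨c, rfl⟩ := hdvd
    rw [if_pos ⟨c, rfl⟩]
    simp [csdE_T_mul T hT c]
  · rw [if_neg hdvd]
    have hne : csdE T n ≠ 1 := by
      intro h
      rw [csdE, Complex.exp_eq_one_iff] at h
      obtain ⟨c, hc⟩ := h
      apply hdvd
      refine ⟨c, ?_⟩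
      have hT0 : (T : ℂ) ≠ 0 := by exact_mod_cast hT.ne'
      have hP : (2 * (Real.pi : ℂ) * Complex.I) ≠ 0 :=
        mul_ne_zero (mul_ne_zero two_ne_zero (by exact_mod_cast Real.pi_ne_zero))
          Complex.I_ne_zero
      have h2 : (2 * (Real.pi : ℂ) * Complex.I) * (n : ℂ) =
          (2 * (Real.pi : ℂ) * Complex.I) * ((T : ℂ) * (c : ℂ)) := by
        field_simp at hc
        linear_combination (2 * (Real.pi : ℂ) * Complex.I) * hc
      have h3 := mul_left_cancel₀ hP h2
      exact_mod_cast h3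
    have hx := geom_sum_mul (csdE T n) T
    have hxT : csdE T n ^ T = 1 := by
      rw [← csdE_pow T n T, csdE_T_mul T hT n]
    rw [hxT, sub_self] at hx
    rcases mul_eq_zero.mp hx with h | h
    · exact h
    · exact absurd (sub_eq_zero.mp h) hne

lemma fin_sub_dvd (T : ℕ) (a b : Fin T) :
    (T : ℤ) ∣ (((a - b : Fin T) : ℕ) : ℤ) - (((a : ℕ) : ℤ) - ((b : ℕ) : ℤ)) := by
  have hval : ((a - b : Fin T) : ℕ) = ((T - (b : ℕ)) + (a : ℕ)) % T := by
    rw [Fin.sub_def]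
  have ha := a.isLt
  have hb := b.isLt
  rcases le_or_gt (b : ℕ) (a : ℕ) with h | h
  · have h1 : ((T - (b : ℕ)) + (a : ℕ)) = T + ((a : ℕ) - (b : ℕ)) := by omega
    have h2 : ((a - b : Fin T) : ℕ) = (a : ℕ) - (b : ℕ) := by
      rw [hval, h1, Nat.add_mod_left, Nat.mod_eq_of_lt (by omega)]
    refine ⟨0, ?_⟩
    rw [h2]
    push_cast [h]
    ring
  · have h2 : ((a - b : Fin T) : ℕ) = (T - (b : ℕ)) + (a : ℕ) := by
      rw [hval, Nat.mod_eq_of_lt (by omega)]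
    refine ⟨1, ?_⟩
    rw [h2]
    push_cast [show (b : ℕ) ≤ T by omega]
    ring

lemma fin_dvd_iff (T : ℕ) (i j t : Fin T) :
    (T : ℤ) ∣ ((j : ℕ) : ℤ) - ((i : ℕ) : ℤ) - ((t : ℕ) : ℤ) ↔ t = j - i := by
  constructor
  · intro h
    have h2 := fin_sub_dvd T j i
    have h3 : (T : ℤ) ∣ (((j - i : Fin T) : ℕ) : ℤ) - ((t : ℕ) : ℤ) := by
      have h4 := dvd_add h2 h
      have h5 : (((j - i : Fin T) : ℕ) : ℤ) - (((j : ℕ) : ℤ) - ((i : ℕ) : ℤ)) +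
          (((j : ℕ) : ℤ) - ((i : ℕ) : ℤ) - ((t : ℕ) : ℤ)) =
          (((j - i : Fin T) : ℕ) : ℤ) - ((t : ℕ) : ℤ) := by ring
      rwa [h5] at h4
    have h4 : (((j - i : Fin T) : ℕ) : ℤ) - ((t : ℕ) : ℤ) = 0 := by
      apply Int.eq_zero_of_abs_lt_dvd h3
      have h5 := (j - i : Fin T).isLt
      have h6 := t.isLt
      rw [abs_lt]
      constructor <;> [push_cast; push_cast] <;> omega
    apply Fin.val_injective
    have : ((t : ℕ) : ℤ) = (((j - i : Fin T) : ℕ) : ℤ) := by omega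
    exact_mod_cast this
  · rintro rfl
    have h2 := fin_sub_dvd T j i
    have h5 : ((j : ℕ) : ℤ) - ((i : ℕ) : ℤ) - (((j - i : Fin T) : ℕ) : ℤ) =
        -((((j - i : Fin T) : ℕ) : ℤ) - (((j : ℕ) : ℤ) - ((i : ℕ) : ℤ))) := by ring
    rw [h5]
    exact dvd_neg.mpr h2


/-- Dominance of the compound-symmetric averaging: with `s = (∑ t, m t) - 1/2` and
`m'_0 = s/T + 1/2`, `m'_t = s/T` for `t ≠ 0`, if
`m_0 - 1/2 + ∑_{t=1}^{T-1} m_t cos (2 π j t / T) ≥ 0` for every `j = 1, …, T-1`,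
then `circ m - circ m'` is positive semidefinite. -/
theorem compound_symmetric_dominance (T : ℕ) (hT : 1 ≤ T) (m : Fin T → ℝ)
    (hm : ∀ t : Fin T, m t = m (-t))
    (hcos : ∀ j : Fin T, (j : ℕ) ≠ 0 →
      0 ≤ m ⟨0, hT⟩ - 1 / 2 +
        ∑ t ∈ Finset.univ.filter (fun t : Fin T => (t : ℕ) ≠ 0),
          m t * Real.cos (2 * Real.pi * (j : ℕ) * (t : ℕ) / T)) :
    ((Matrix.of fun i j : Fin T => m (j - i)) -
      (Matrix.of fun i j : Fin T =>
        (fun t : Fin T => if (t : ℕ) = 0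
            then ((∑ u : Fin T, m u) - 1 / 2) / T + 1 / 2
            else ((∑ u : Fin T, m u) - 1 / 2) / T) (j - i))).PosSemidef := by
  haveI : NeZero T := ⟨by omega⟩
  have hT0 : (0 : ℝ) < T := by exact_mod_cast hT
  set s : ℝ := (∑ u : Fin T, m u) - 1 / 2 with hs
  set md : Fin T → ℝ := fun t => m t - (if (t : ℕ) = 0 then s / T + 1 / 2 else s / T)
    with hmd
  have hMeq : ((Matrix.of fun i j : Fin T => m (j - i)) -
      (Matrix.of fun i j : Fin T =>
        (fun t : Fin T => if (t : ℕ) = 0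
            then s / T + 1 / 2
            else s / T) (j - i))) = Matrix.of (fun i j : Fin T => md (j - i)) := by
    ext i j
    simp [hmd, Matrix.sub_apply]
  rw [hMeq]
  have hvz : ∀ t : Fin T, ((-t : Fin T) : ℕ) = 0 ↔ (t : ℕ) = 0 := by
    intro t
    constructor
    · intro h
      have h2 : (-t : Fin T) = 0 := Fin.ext (by simp [h])
      have h3 : t = 0 := neg_eq_zero.mp h2
      simp [h3]
    · intro h
      have h3 : t = 0 := Fin.ext (by simp [h])
      simp [h3]
  have hmd_even : ∀ t : Fin T, md (-t) = md t := by
    intro t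
    simp only [hmd]
    rw [← hm t]
    congr 1
    exact if_congr (hvz t) rfl rfl
  refine Matrix.posSemidef_iff_dotProduct_mulVec.mpr ⟨?_, ?_⟩
  · ext i j
    simp only [Matrix.conjTranspose_apply, Matrix.of_apply, star_trivial]
    have h : (j - i : Fin T) = -(i - j) := (neg_sub (i : Fin T) j).symm
    rw [h, hmd_even]
  · intro x
    have hQ : dotProduct (star x) ((Matrix.of fun i j : Fin T => md (j - i)).mulVec x)
        = ∑ i : Fin T, ∑ j : Fin T, x i * (md (j - i) * x j) := by
      simp [dotProduct, Matrix.mulVec, Finset.mul_sum]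
    rw [hQ]
    set X : Fin T → ℂ := fun k => ∑ i : Fin T, (x i : ℂ) *
      csdE T (((k : ℕ) : ℤ) * ((i : ℕ) : ℤ)) with hX
    set L : Fin T → ℂ := fun k => ∑ t : Fin T, (md t : ℂ) *
      csdE T (-(((k : ℕ) : ℤ) * ((t : ℕ) : ℤ))) with hL
    have hterm : ∀ k : Fin T, L k * ((starRingEnd ℂ) (X k) * X k)
        = ∑ t : Fin T, ∑ i : Fin T, ∑ j : Fin T,
            (md t : ℂ) * (x i : ℂ) * (x j : ℂ) *
              csdE T (((k : ℕ) : ℤ) * (((j : ℕ) : ℤ) - ((i : ℕ) : ℤ) - ((t : ℕ) : ℤ))) := by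
      intro k
      have hconj : (starRingEnd ℂ) (X k)
          = ∑ i : Fin T, (x i : ℂ) * csdE T (-(((k : ℕ) : ℤ) * ((i : ℕ) : ℤ))) := by
        rw [hX, map_sum]
        refine Finset.sum_congr rfl fun i _ => ?_
        rw [map_mul, Complex.conj_ofReal, csdE_conj]
      rw [hconj]
      simp only [hL, hX]
      rw [Finset.sum_mul]
      refine Finset.sum_congr rfl fun t _ => ?_
      rw [Finset.sum_mul, Finset.mul_sum]
      refine Finset.sum_congr rfl fun i _ => ?_
      rw [Finset.mul_sum, Finset.mul_sum]
      refine Finset.sum_congr rfl fun j _ => ?_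
      have hE : csdE T (((k : ℕ) : ℤ) * (((j : ℕ) : ℤ) - ((i : ℕ) : ℤ) - ((t : ℕ) : ℤ)))
          = csdE T (-(((k : ℕ) : ℤ) * ((t : ℕ) : ℤ))) *
            (csdE T (-(((k : ℕ) : ℤ) * ((i : ℕ) : ℤ))) *
              csdE T (((k : ℕ) : ℤ) * ((j : ℕ) : ℤ))) := by
        rw [← csdE_add, ← csdE_add]
        congr 1
        ring
      rw [hE]
      ring
    have hmain : ∑ k : Fin T, L k * ((starRingEnd ℂ) (X k) * X k)
        = ∑ i : Fin T, ∑ j : Fin T,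
            ((x i : ℂ) * ((md (j - i) : ℂ) * (x j : ℂ))) * (T : ℂ) := by
      rw [Finset.sum_congr rfl fun k _ => hterm k, Finset.sum_comm]
      have h2 : ∀ t : Fin T,
          (∑ k : Fin T, ∑ i : Fin T, ∑ j : Fin T, (md t : ℂ) * (x i : ℂ) * (x j : ℂ)
              * csdE T (((k : ℕ) : ℤ) * (((j : ℕ) : ℤ) - ((i : ℕ) : ℤ) - ((t : ℕ) : ℤ))))
          = ∑ i : Fin T, ∑ j : Fin T, (md t : ℂ) * (x i : ℂ) * (x j : ℂ)
              * (if t = j - i then (T : ℂ) else 0) := by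
        intro t
        rw [Finset.sum_comm]
        refine Finset.sum_congr rfl fun i _ => ?_
        rw [Finset.sum_comm]
        refine Finset.sum_congr rfl fun j _ => ?_
        rw [← Finset.mul_sum]
        congr 1
        rw [csdE_sum T (by omega) ((((j : ℕ) : ℤ) - ((i : ℕ) : ℤ) - ((t : ℕ) : ℤ)))]
        exact if_congr (fin_dvd_iff T i j t) rfl rfl
      rw [Finset.sum_congr rfl fun t _ => h2 t, Finset.sum_comm]
      refine Finset.sum_congr rfl fun i _ => ?_
      rw [Finset.sum_comm]
      refine Finset.sum_congr rfl fun j _ => ?_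
      simp only [mul_ite, mul_zero]
      rw [Finset.sum_ite_eq' Finset.univ (j - i)
        (fun t => (md t : ℂ) * (x i : ℂ) * (x j : ℂ) * (T : ℂ))]
      simp only [Finset.mem_univ, if_true]
      ring
    have hre : ∀ k : Fin T, (L k).re
        = ∑ t : Fin T, md t * Real.cos (2 * Real.pi * (k : ℕ) * (t : ℕ) / T) := by
      intro k
      rw [hL]
      rw [Complex.re_sum]
      refine Finset.sum_congr rfl fun t _ => ?_
      rw [Complex.re_ofReal_mul, csdE_re]
      congr 1
      have harg : (2 : ℝ) * Real.pi * ((-(((k : ℕ) : ℤ) * ((t : ℕ) : ℤ)) : ℤ) : ℝ) / T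
          = -(2 * Real.pi * (k : ℕ) * (t : ℕ) / T) := by push_cast; ring
      rw [harg, Real.cos_neg]
    have hif : ∀ t : Fin T, (if (t : ℕ) = 0 then s / T + 1 / 2 else s / T)
        = s / T + (if t = (0 : Fin T) then (1 / 2 : ℝ) else 0) := by
      intro t
      by_cases h : (t : ℕ) = 0
      · have h' : t = 0 := Fin.ext (by simp [h])
        rw [if_pos h, if_pos h']
      · have h' : t ≠ 0 := fun hh => h (by simp [hh])
        rw [if_neg h, if_neg h', add_zero]
    have hsum_md : ∑ t : Fin T, md t = 0 := by
      have h1 : ∑ t : Fin T, (if (t : ℕ) = 0 then s / T + 1 / 2 else s / T)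
          = T * (s / T) + 1 / 2 := by
        rw [Finset.sum_congr rfl fun t _ => hif t, Finset.sum_add_distrib,
          Finset.sum_const, Finset.card_univ, Fintype.card_fin,
          Finset.sum_ite_eq' Finset.univ (0 : Fin T) (fun _ => (1 / 2 : ℝ))]
        simp [nsmul_eq_mul]
      simp only [hmd]
      rw [Finset.sum_sub_distrib, h1]
      have h3 : (T : ℝ) * (s / T) = s := by field_simp
      rw [h3, hs]
      ring
    have hLnn : ∀ k : Fin T, 0 ≤ (L k).re := by
      intro k
      rw [hre k]
      by_cases hk : (k : ℕ) = 0
      · have hone : ∀ t : Fin T, md t * Real.cos (2 * Real.pi * (k : ℕ) * (t : ℕ) / T)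
            = md t := by
          intro t
          rw [hk]
          simp
        rw [Finset.sum_congr rfl fun t _ => hone t, hsum_md]
      · have hdvd : ¬ (T : ℤ) ∣ ((k : ℕ) : ℤ) := by
          intro hd
          have hd2 : T ∣ (k : ℕ) := by exact_mod_cast hd
          have h5 := Nat.le_of_dvd (Nat.pos_of_ne_zero hk) hd2
          have h6 := k.isLt
          omega
        have hcsum : ∑ t : Fin T, Real.cos (2 * Real.pi * (k : ℕ) * (t : ℕ) / T) = 0 := by
          have h1 := csdE_sum T (by omega) ((k : ℕ) : ℤ)
          rw [if_neg hdvd] at h1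
          have h2 := congrArg Complex.re h1
          rw [Complex.re_sum] at h2
          simp only [Complex.zero_re] at h2
          rw [← h2]
          refine Finset.sum_congr rfl fun t _ => ?_
          rw [csdE_re]
          congr 1
          push_cast
          ring
        have hind : ∑ t : Fin T, (if t = (0 : Fin T) then (1 / 2 : ℝ) else 0) *
            Real.cos (2 * Real.pi * (k : ℕ) * (t : ℕ) / T) = 1 / 2 := by
          simp only [ite_mul, zero_mul]
          rw [Finset.sum_ite_eq' Finset.univ (0 : Fin T)
            (fun t => (1 / 2 : ℝ) * Real.cos (2 * Real.pi * (k : ℕ) * (t : ℕ) / T))]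
          simp
        have hC : ∑ t : Fin T, md t * Real.cos (2 * Real.pi * (k : ℕ) * (t : ℕ) / T)
            = (∑ t : Fin T, m t * Real.cos (2 * Real.pi * (k : ℕ) * (t : ℕ) / T))
              - ((s / T) * (∑ t : Fin T, Real.cos (2 * Real.pi * (k : ℕ) * (t : ℕ) / T))
                + 1 / 2) := by
          have hsp : ∀ t : Fin T, md t * Real.cos (2 * Real.pi * (k : ℕ) * (t : ℕ) / T)
              = m t * Real.cos (2 * Real.pi * (k : ℕ) * (t : ℕ) / T)
                - ((s / T) * Real.cos (2 * Real.pi * (k : ℕ) * (t : ℕ) / T)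
                  + (if t = (0 : Fin T) then (1 / 2 : ℝ) else 0) *
                    Real.cos (2 * Real.pi * (k : ℕ) * (t : ℕ) / T)) := by
            intro t
            simp only [hmd]
            rw [hif t]
            ring
          rw [Finset.sum_congr rfl fun t _ => hsp t, Finset.sum_sub_distrib,
            Finset.sum_add_distrib, hind, ← Finset.mul_sum]
        have hfilter : Finset.filter (fun t : Fin T => ¬ (t : ℕ) ≠ 0) Finset.univ
            = {(0 : Fin T)} := by
          ext t
          simp only [Finset.mem_filter, Finset.mem_univ, true_and, not_not,
            Finset.mem_singleton]
          constructor
          · intro h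
            exact Fin.ext (by simp [h])
          · intro h
            simp [h]
        have hm0 : ∑ t : Fin T, m t * Real.cos (2 * Real.pi * (k : ℕ) * (t : ℕ) / T)
            = (∑ t ∈ Finset.univ.filter (fun t : Fin T => (t : ℕ) ≠ 0),
                m t * Real.cos (2 * Real.pi * (k : ℕ) * (t : ℕ) / T)) + m ⟨0, hT⟩ := by
          rw [← Finset.sum_filter_add_sum_filter_not Finset.univ
            (fun t : Fin T => (t : ℕ) ≠ 0)
            (fun t => m t * Real.cos (2 * Real.pi * (k : ℕ) * (t : ℕ) / T))]
          congr 1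
          rw [hfilter, Finset.sum_singleton]
          have h0 : m (0 : Fin T) = m ⟨0, hT⟩ := by
            congr 1
          simp [h0]
        have hc := hcos k hk
        rw [hC, hm0, hcsum]
        linarith
    have hfin : (T : ℝ) * (∑ i : Fin T, ∑ j : Fin T, x i * (md (j - i) * x j))
        = ∑ k : Fin T, (L k).re * Complex.normSq (X k) := by
      have h1 := congrArg Complex.re hmain
      rw [Complex.re_sum] at h1
      have h2 : ∀ k : Fin T, (L k * ((starRingEnd ℂ) (X k) * X k)).re
          = (L k).re * Complex.normSq (X k) := by
        intro k
        rw [show (starRingEnd ℂ) (X k) * X k = ((Complex.normSq (X k) : ℝ) : ℂ) by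
          rw [mul_comm, Complex.mul_conj]]
        rw [mul_comm, Complex.re_ofReal_mul]
        ring
      rw [Finset.sum_congr rfl fun k _ => h2 k] at h1
      have h3 : (∑ i : Fin T, ∑ j : Fin T,
            ((x i : ℂ) * ((md (j - i) : ℂ) * (x j : ℂ))) * (T : ℂ))
          = ((((T : ℝ) * ∑ i : Fin T, ∑ j : Fin T, x i * (md (j - i) * x j)) : ℝ) : ℂ) := by
        push_cast
        rw [Finset.mul_sum]
        refine Finset.sum_congr rfl fun i _ => ?_
        rw [Finset.mul_sum]
        refine Finset.sum_congr rfl fun j _ => ?_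
        ring
      rw [h3, Complex.ofReal_re] at h1
      exact h1.symm
    have hnn : 0 ≤ ∑ k : Fin T, (L k).re * Complex.normSq (X k) :=
      Finset.sum_nonneg fun k _ => mul_nonneg (hLnn k) (Complex.normSq_nonneg _)
    nlinarith [hfin, hnn, hT0]
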